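/- Let U be a finite set, t ≥ 1, and g₁, …, g_t : 2^U → R set functions into a commutative ring. Then for every S ⊆ U, ∑_{X₁ ∪ ⋯ ∪ X_t = S} g₁(X₁)⋯g_t(X_t) = ∑_{Y ⊆ S} (−1)^{|S∖Y|} ∏_{j=1}^t (∑_{Z ⊆ Y} g_j(Z)). -/

import Mathlib

lemma aux_sum_sdiff {U : Type*} [DecidableEq U] {R : Type*} [CommRing R] (A : Finset U) :
    ∑ W ∈ A.powerset, (-1 : R) ^ (A \ W).card = if A = ∅ then 1 else 0 := by
  have hcast : ∑ W ∈ A.powerset, (-1 : R) ^ W.card = if A = ∅ then 1 else 0 := by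
    have h := Finset.sum_powerset_neg_one_pow_card (x := A)
    calc ∑ W ∈ A.powerset, (-1 : R) ^ W.card
        = ((∑ W ∈ A.powerset, (-1 : ℤ) ^ W.card : ℤ) : R) := by push_cast; rfl
      _ = _ := by rw [h]; split_ifs <;> simp
  rw [← hcast]
  apply Finset.sum_nbij' (fun W => A \ W) (fun W => A \ W)
  · intro W hW
    simp only [Finset.mem_powerset] at *
    exact Finset.sdiff_subset
  · intro W hW
    simp only [Finset.mem_powerset] at *
    exact Finset.sdiff_subset
  · intro W hW
    simp only [Finset.mem_powerset] at hW
    exact Finset.sdiff_sdiff_eq_self hW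
  · intro W hW
    simp only [Finset.mem_powerset] at hW
    exact Finset.sdiff_sdiff_eq_self hW
  · intro W hW; rfl

lemma aux_indicator {U : Type*} [DecidableEq U] {R : Type*} [CommRing R] (T S : Finset U) :
    ∑ Y ∈ S.powerset.filter (fun Y => T ⊆ Y), (-1 : R) ^ (S \ Y).card
      = if T = S then 1 else 0 := by
  by_cases hTS : T ⊆ S
  · have : ∑ Y ∈ S.powerset.filter (fun Y => T ⊆ Y), (-1 : R) ^ (S \ Y).card
        = ∑ W ∈ (S \ T).powerset, (-1 : R) ^ ((S \ T) \ W).card := by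
      apply Finset.sum_nbij' (fun Y => Y \ T) (fun W => W ∪ T)
      · intro Y hY
        simp only [Finset.mem_filter, Finset.mem_powerset] at hY
        simp only [Finset.mem_powerset]
        exact Finset.sdiff_subset_sdiff hY.1 le_rfl
      · intro W hW
        simp only [Finset.mem_powerset] at hW
        simp only [Finset.mem_filter, Finset.mem_powerset]
        constructor
        · exact Finset.union_subset (hW.trans Finset.sdiff_subset) hTS
        · exact Finset.subset_union_right
      · intro Y hY
        simp only [Finset.mem_filter, Finset.mem_powerset] at hY
        exact Finset.sdiff_union_of_subset hY.2
      · intro W hW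
        simp only [Finset.mem_powerset] at hW
        rw [Finset.union_sdiff_right]
        exact Finset.sdiff_eq_self_of_disjoint
          (Finset.disjoint_of_subset_left hW Finset.sdiff_disjoint)
      · intro Y hY
        simp only [Finset.mem_filter, Finset.mem_powerset] at hY
        congr 2
        ext x
        simp only [Finset.mem_sdiff]
        have hT : x ∈ T → x ∈ Y := fun h => hY.2 h
        tauto
    rw [this, aux_sum_sdiff]
    exact if_congr (by rw [Finset.sdiff_eq_empty_iff_subset]
                       exact ⟨fun h => Finset.Subset.antisymm hTS h, fun h => h ▸ le_rfl⟩) rfl rfl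
  · have h1 : S.powerset.filter (fun Y => T ⊆ Y) = ∅ := by
      apply Finset.filter_false_of_mem
      intro Y hY hTY
      exact hTS (hTY.trans (Finset.mem_powerset.mp hY))
    have h2 : T ≠ S := fun h => hTS (h ▸ le_rfl)
    simp [h1, h2]

/-- The cover product evaluated at `S` equals the inclusion–exclusion expression:
`∑_{X₁ ∪ ⋯ ∪ X_t = S} g₁(X₁)⋯g_t(X_t)
  = ∑_{Y ⊆ S} (-1)^{|S∖Y|} ∏_j (∑_{Z ⊆ Y} g_j(Z))`. -/
theorem cover_product_inclusion_exclusion {U R : Type*} [Fintype U] [DecidableEq U]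
    [CommRing R] (t : ℕ) (ht : 1 ≤ t) (g : Fin t → Finset U → R) (S : Finset U) :
    ∑ Xs ∈ (Finset.univ : Finset (Fin t → Finset U)).filter
        (fun Xs => Finset.univ.biUnion Xs = S),
      ∏ j, g j (Xs j)
    = ∑ Y ∈ S.powerset, (-1 : R) ^ (S \ Y).card * ∏ j, ∑ Z ∈ Y.powerset, g j Z := by
  have hprod : ∀ Y : Finset U,
      ∏ j, ∑ Z ∈ Y.powerset, g j Z
        = ∑ Xs ∈ (Finset.univ : Finset (Fin t → Finset U)), (if Finset.univ.biUnion Xs ⊆ Y then ∏ j, g j (Xs j) else 0) := by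
    intro Y
    rw [Finset.prod_univ_sum]
    rw [← Finset.sum_filter]
    apply Finset.sum_congr
    · ext Xs
      simp only [Fintype.mem_piFinset, Finset.mem_powerset, Finset.mem_filter,
        Finset.mem_univ, true_and, Finset.biUnion_subset]
      constructor
      · intro h j _; exact h j
      · intro h j; exact h j trivial
    · intros; rfl
  rw [show (∑ Y ∈ S.powerset, (-1 : R) ^ (S \ Y).card * ∏ j, ∑ Z ∈ Y.powerset, g j Z)
      = ∑ Y ∈ S.powerset, ∑ Xs ∈ (Finset.univ : Finset (Fin t → Finset U)),
          (-1 : R) ^ (S \ Y).card * (if Finset.univ.biUnion Xs ⊆ Y then ∏ j, g j (Xs j) else 0)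
    from Finset.sum_congr rfl fun Y _ => by rw [hprod Y, Finset.mul_sum]]
  rw [Finset.sum_comm]
  rw [Finset.sum_filter]
  apply Finset.sum_congr rfl
  intro Xs _
  simp only [mul_ite, mul_zero]
  rw [← Finset.sum_filter, ← Finset.sum_mul, aux_indicator]
  split_ifs <;> simp
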